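/- Let A be a trim unambiguous NFA. Then A is not positively resolvable if and only if there exist a state q, a letter a, words x, z ∈ Σ* and y ∈ Σ+ with both y and z beginning with the letter a, and states q' ≠ q'' with (q, a, q') ∈ Δ and (q, a, q'') ∈ Δ, such that: q ∈ δ(q0, x); there is a run from q back to q on y whose first transition is (q, a, q'); and there is a run from q on z whose first transition is (q, a, q'') and which ends in an accepting state (so xyz ∈ L(A), and the transition taken when reading y from q is nondeterministic). -/

import Mathlib

open scoped BigOperators

/-- A nondeterministic finite automaton over alphabet `σ` with states `Q`:
an initial state, a finite set of transitions and a finite set of accepting states. -/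
structure NFA' (σ Q : Type) where
  init : Q
  trans : Finset (Q × σ × Q)
  accept : Finset Q

namespace NFA'

variable {σ Q : Type}

/-- `IsRun Δ p w ts r`: `ts` is a run on the word `w` from state `p` to state `r`,
using transitions from `Δ`. -/
inductive IsRun (Δ : Finset (Q × σ × Q)) : Q → List σ → List (Q × σ × Q) → Q → Prop
  | nil (q : Q) : IsRun Δ q [] [] q
  | cons {p : Q} {a : σ} {q r : Q} {w : List σ} {ts : List (Q × σ × Q)} :
      (p, a, q) ∈ Δ → IsRun Δ q w ts r → IsRun Δ p (a :: w) ((p, a, q) :: ts) r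

/-- `ts` is an accepting run of `A` on `w`. -/
def AccRun (A : NFA' σ Q) (w : List σ) (ts : List (Q × σ × Q)) : Prop :=
  ∃ r ∈ A.accept, IsRun A.trans A.init w ts r

/-- The language of `A`: words admitting an accepting run. -/
def lang (A : NFA' σ Q) : Set (List σ) := {w | ∃ ts, A.AccRun w ts}

/-- `δ(q, u)`: the set of states reachable from `q` by a run on `u`. -/
def reach (A : NFA' σ Q) (q : Q) (u : List σ) : Set Q :=
  {r | ∃ ts, IsRun A.trans q u ts r}

/-- The word `u` admits an accepting run from the state `q`. -/
def AccFrom (A : NFA' σ Q) (q : Q) (u : List σ) : Prop :=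
  ∃ r ∈ A.accept, ∃ ts, IsRun A.trans q u ts r

/-- `A_S`: the automaton `A` with transitions restricted to `S`. -/
def restrict (A : NFA' σ Q) (S : Finset (Q × σ × Q)) : NFA' σ Q :=
  { A with trans := S }

/-- `A` is `k`-ambiguous: every word has at most `k` accepting runs. -/
def kAmbiguous (A : NFA' σ Q) (k : ℕ) : Prop :=
  ∀ w, {ts | A.AccRun w ts}.encard ≤ (k : ℕ∞)

/-- `A` is finitely-ambiguous. -/
def FinitelyAmbiguous (A : NFA' σ Q) : Prop := ∃ k : ℕ, 0 < k ∧ A.kAmbiguous k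

/-- A memoryless stochastic resolver for `A`: probabilities, supported on the transitions
of `A`, summing to one over the outgoing transitions of every pair `(p, a)` that has at
least one outgoing transition (implicitly, `A` is completed with a non-accepting sink). -/
structure Resolver (A : NFA' σ Q) where
  r : Q × σ × Q → ℝ
  nonneg : ∀ t, 0 ≤ r t
  le_one : ∀ t, r t ≤ 1
  supp : ∀ t, r t ≠ 0 → t ∈ A.trans
  sum_one : ∀ p a, (∃ q, (p, a, q) ∈ A.trans) →
      ∑ t ∈ A.trans, {t : Q × σ × Q | t.1 = p ∧ t.2.1 = a}.indicator r t = 1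

/-- The probability of a run: the product of the probabilities of its transitions. -/
def runProb (f : Q × σ × Q → ℝ) (ts : List (Q × σ × Q)) : ℝ := (ts.map f).prod

/-- The acceptance probability of a word: the sum, over all accepting runs, of the
product of the transition probabilities along the run. -/
noncomputable def accProb (A : NFA' σ Q) (f : Q × σ × Q → ℝ) (w : List σ) : ℝ :=
  ∑ᶠ ts ∈ {ts | A.AccRun w ts}, runProb f ts

/-- `A` is `λ`-memoryless-stochastically-resolvable. -/
def Resolvable (A : NFA' σ Q) (lam : ℝ) : Prop :=
  ∃ R : A.Resolver, {w | lam ≤ A.accProb R.r w} = A.lang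

/-- `A` is positively (memoryless stochastically) resolvable. -/
def PositivelyResolvable (A : NFA' σ Q) : Prop :=
  ∃ lam : ℝ, 0 < lam ∧ A.Resolvable lam

/-- The support `S` is bad: no resolver whose support is exactly `S` witnesses
positive resolvability. -/
def BadSupport (A : NFA' σ Q) (S : Finset (Q × σ × Q)) : Prop :=
  ∀ R : A.Resolver, (∀ t, R.r t ≠ 0 ↔ t ∈ S) →
    ∀ lam : ℝ, 0 < lam → {w | lam ≤ A.accProb R.r w} ≠ A.lang

/-- A transition is nondeterministic in `S`. -/
def NondetIn (S : Finset (Q × σ × Q)) (t : Q × σ × Q) : Prop :=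
  t ∈ S ∧ ∃ q', q' ≠ t.2.2 ∧ (t.1, t.2.1, q') ∈ S

/-- The number of transitions of a run that are nondeterministic in `S`. -/
noncomputable def nondetCount (S : Finset (Q × σ × Q)) (ts : List (Q × σ × Q)) : ℕ :=
  (ts.map (Set.indicator {t | NondetIn S t} (fun _ => 1))).sum

/-- `b(w)`: the minimal number of `S`-nondeterministic transitions over all accepting
runs of `w` in `A_S`. -/
noncomputable def minNondet (A : NFA' σ Q) (S : Finset (Q × σ × Q)) (w : List σ) : ℕ :=
  sInf {m | ∃ ts, (A.restrict S).AccRun w ts ∧ nondetCount S ts = m}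

/-- The state of a run `ts` (started in `q0`) after `n` transitions. -/
def stateAt (q0 : Q) (ts : List (Q × σ × Q)) (n : ℕ) : Q :=
  match (ts.take n).getLast? with
  | some t => t.2.2
  | none => q0

/-- `Θ` makes `A` into a probabilistic finite automaton (PFA) based on `A`. -/
def IsPFA (A : NFA' σ Q) (Θ : Q × σ × Q → ℝ) : Prop :=
  (∀ t ∈ A.trans, 0 < Θ t ∧ Θ t ≤ 1) ∧ (∀ t, t ∉ A.trans → Θ t = 0) ∧
  ∀ p a, (∃ q, (p, a, q) ∈ A.trans) →
    ∑ t ∈ A.trans, {t : Q × σ × Q | t.1 = p ∧ t.2.1 = a}.indicator Θ t = 1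

/-- The PFA is simple: every transition has probability `1/2` or `1`. -/
def IsSimple (A : NFA' σ Q) (Θ : Q × σ × Q → ℝ) : Prop :=
  ∀ t ∈ A.trans, Θ t = 1/2 ∨ Θ t = 1

end NFA'

open NFA'

namespace NFA'X

open NFA'

variable {σ Q : Type}

open scoped Classical

/-- Out-degree of the pair `(p, a)`. -/
noncomputable def deg (A : NFA' σ Q) (p : Q) (a : σ) : ℕ :=
  (A.trans.filter (fun t => t.1 = p ∧ t.2.1 = a)).card

/-- `t` is a nondeterministic transition. -/
def Nondet (A : NFA' σ Q) (t : Q × σ × Q) : Prop :=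
  ∃ q'', q'' ≠ t.2.2 ∧ (t.1, t.2.1, q'') ∈ A.trans

lemma isRun_mem_trans {Δ : Finset (Q × σ × Q)} {p r : Q} {w : List σ}
    {ts : List (Q × σ × Q)} (h : IsRun Δ p w ts r) : ∀ t ∈ ts, t ∈ Δ := by
  induction h with
  | nil => simp
  | cons ht _ ih =>
    intro t htm
    rcases List.mem_cons.1 htm with rfl | h'
    · exact ht
    · exact ih _ h'

lemma isRun_append {Δ : Finset (Q × σ × Q)} {p m r : Q} {w1 w2 : List σ}
    {ts1 ts2 : List (Q × σ × Q)} (h1 : IsRun Δ p w1 ts1 m)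
    (h2 : IsRun Δ m w2 ts2 r) : IsRun Δ p (w1 ++ w2) (ts1 ++ ts2) r := by
  induction h1 with
  | nil => simpa
  | cons ht _ ih => exact IsRun.cons ht (ih h2)

lemma isRun_cons_inv {Δ : Finset (Q × σ × Q)} {p r : Q} {w : List σ}
    {t : Q × σ × Q} {ts : List (Q × σ × Q)} (h : IsRun Δ p w (t :: ts) r) :
    p = t.1 ∧ ∃ w', w = t.2.1 :: w' ∧ t ∈ Δ ∧ IsRun Δ t.2.2 w' ts r := by
  obtain ⟨p1, a1, s1⟩ := t
  cases h with
  | cons ht h' => exact ⟨rfl, _, rfl, ht, h'⟩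

lemma isRun_split {Δ : Finset (Q × σ × Q)} {p r : Q} {w : List σ}
    {ts1 ts2 : List (Q × σ × Q)} (h : IsRun Δ p w (ts1 ++ ts2) r) :
    ∃ m w1 w2, w = w1 ++ w2 ∧ IsRun Δ p w1 ts1 m ∧ IsRun Δ m w2 ts2 r := by
  induction ts1 generalizing p w with
  | nil => exact ⟨p, [], w, rfl, IsRun.nil p, h⟩
  | cons t ts1 ih =>
    obtain ⟨rfl, w', rfl, ht, h'⟩ := isRun_cons_inv h
    obtain ⟨m, w1, w2, rfl, r1, r2⟩ := ih h'
    exact ⟨m, t.2.1 :: w1, w2, rfl, IsRun.cons (by simpa using ht) r1, r2⟩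

lemma runProb_nil (f : Q × σ × Q → ℝ) : runProb f [] = 1 := rfl

lemma runProb_cons (f : Q × σ × Q → ℝ) (t : Q × σ × Q) (ts : List (Q × σ × Q)) :
    runProb f (t :: ts) = f t * runProb f ts := by simp [runProb]

lemma runProb_append (f : Q × σ × Q → ℝ) (l1 l2 : List (Q × σ × Q)) :
    runProb f (l1 ++ l2) = runProb f l1 * runProb f l2 := by simp [runProb]

lemma runProb_nonneg {f : Q × σ × Q → ℝ} (h0 : ∀ t, 0 ≤ f t)
    (ts : List (Q × σ × Q)) : 0 ≤ runProb f ts := by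
  induction ts with
  | nil => norm_num [runProb_nil]
  | cons t ts ih => rw [runProb_cons]; exact mul_nonneg (h0 t) ih

lemma runProb_le_one {f : Q × σ × Q → ℝ} (h0 : ∀ t, 0 ≤ f t) (h1 : ∀ t, f t ≤ 1)
    (ts : List (Q × σ × Q)) : runProb f ts ≤ 1 := by
  induction ts with
  | nil => norm_num [runProb_nil]
  | cons t ts ih =>
    rw [runProb_cons]
    exact mul_le_one₀ (h1 t) (runProb_nonneg h0 ts) ih

lemma accProb_eq_runProb {A : NFA' σ Q} (hunamb : A.kAmbiguous 1)
    (f : Q × σ × Q → ℝ) {w : List σ} {ts : List (Q × σ × Q)} (h : A.AccRun w ts) :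
    A.accProb f w = runProb f ts := by
  have hset : {ts' | A.AccRun w ts'} = {ts} := by
    apply Set.eq_singleton_iff_unique_mem.2
    refine ⟨h, fun ts' h' => ?_⟩
    have h1 := hunamb w
    rw [Nat.cast_one] at h1
    exact Set.encard_le_one_iff.1 h1 _ _ h' h
  rw [accProb, hset, finsum_mem_singleton]

lemma accProb_eq_zero {A : NFA' σ Q} (f : Q × σ × Q → ℝ) {w : List σ}
    (h : w ∉ A.lang) : A.accProb f w = 0 := by
  have hset : {ts' | A.AccRun w ts'} = (∅ : Set (List (Q × σ × Q))) := by
    ext ts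
    simp only [Set.mem_setOf_eq, Set.mem_empty_iff_false, iff_false]
    exact fun hh => h ⟨ts, hh⟩
  rw [accProb, hset, finsum_mem_empty]


/-- The witness property from the theorem statement. -/
def Witness (A : NFA' σ Q) : Prop :=
  ∃ (q q' q'' : Q) (a : σ) (x y z : List σ),
    q' ≠ q'' ∧ (q, a, q') ∈ A.trans ∧ (q, a, q'') ∈ A.trans ∧
    y ≠ [] ∧ y.head? = some a ∧ z.head? = some a ∧
    q ∈ A.reach A.init x ∧
    (∃ ts, IsRun A.trans q y ts q ∧ ts.head? = some (q, a, q')) ∧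
    (∃ ts r, IsRun A.trans q z ts r ∧ r ∈ A.accept ∧ ts.head? = some (q, a, q''))

lemma nodup_nondet {A : NFA' σ Q}
    (htrim : ∀ q : Q, (∃ x, q ∈ A.reach A.init x) ∧ ∃ z, A.AccFrom q z)
    (hW : ¬ Witness A) :
    ∀ (ts : List (Q × σ × Q)) (p : Q) (w : List σ) (r : Q),
      (∃ x, p ∈ A.reach A.init x) → IsRun A.trans p w ts r →
      List.Nodup ((ts.filter (fun t => decide (Nondet A t))).map
        (fun t => (t.1, t.2.1))) := by
  intro ts
  induction ts with
  | nil => intro p w r _ _; simp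
  | cons t ts ih =>
    intro p w r hreach hrun
    obtain ⟨rfl, w', rfl, ht, h'⟩ := isRun_cons_inv hrun
    have hreach' : ∃ x, t.2.2 ∈ A.reach A.init x := by
      obtain ⟨x, tsx, hx⟩ := hreach
      exact ⟨x ++ [t.2.1], tsx ++ [t], isRun_append hx
        (IsRun.cons (by simpa using ht) (IsRun.nil _))⟩
    have hrest := ih t.2.2 w' r hreach' h'
    rw [List.filter_cons]
    by_cases hnd : Nondet A t
    · rw [if_pos (by simpa using hnd)]
      rw [List.map_cons, List.nodup_cons]
      refine ⟨?_, hrest⟩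
      intro hmem
      obtain ⟨t', ht'f, ht'pair⟩ := List.mem_map.1 hmem
      have ht'ts : t' ∈ ts := List.mem_of_mem_filter ht'f
      obtain ⟨u, v, rfl⟩ := List.append_of_mem ht'ts
      obtain ⟨m, w1, w2, rfl, hu, hv⟩ := isRun_split h'
      obtain ⟨rfl, w2', rfl, ht', hv'⟩ := isRun_cons_inv hv
      obtain ⟨h1, h2⟩ := Prod.mk.injEq _ _ _ _ ▸ ht'pair
      rw [h1] at hu
      obtain ⟨q'', hq''ne, hq''t⟩ := hnd
      obtain ⟨z', r', hr', tsz, hz⟩ := (htrim q'').2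
      obtain ⟨x, hx⟩ := hreach
      refine hW ⟨t.1, t.2.2, q'', t.2.1, x, t.2.1 :: w1, t.2.1 :: z',
        hq''ne.symm, ht, hq''t, List.cons_ne_nil _ _, rfl, rfl, hx,
        ⟨t :: u, IsRun.cons ht hu, rfl⟩,
        ⟨(t.1, t.2.1, q'') :: tsz, r', IsRun.cons hq''t hz, hr', rfl⟩⟩
    · rw [if_neg (by simpa using hnd)]
      exact hrest


lemma nondet_count_le {A : NFA' σ Q} {ts : List (Q × σ × Q)}
    (hmem : ∀ t ∈ ts, t ∈ A.trans)
    (hnd : List.Nodup ((ts.filter (fun t => decide (Nondet A t))).map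
      (fun t => (t.1, t.2.1)))) :
    (ts.filter (fun t => decide (Nondet A t))).length ≤ A.trans.card := by
  set l := (ts.filter (fun t => decide (Nondet A t))).map (fun t => (t.1, t.2.1)) with hl
  have hsub : l.toFinset ⊆ A.trans.image (fun t => (t.1, t.2.1)) := by
    intro x hx
    obtain ⟨t', ht'f, ht'pair⟩ := List.mem_map.1 (List.mem_toFinset.1 hx)
    exact Finset.mem_image.2 ⟨t', hmem t' (List.mem_of_mem_filter ht'f), ht'pair⟩
  calc (ts.filter (fun t => decide (Nondet A t))).length
      = l.length := (List.length_map _).symm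
    _ = l.toFinset.card := (List.toFinset_card_of_nodup hnd).symm
    _ ≤ (A.trans.image (fun t => (t.1, t.2.1))).card := Finset.card_le_card hsub
    _ ≤ A.trans.card := Finset.card_image_le

lemma deg_def (A : NFA' σ Q) (p : Q) (a : σ) :
    deg A p a = (A.trans.filter (fun t => t.1 = p ∧ t.2.1 = a)).card := rfl

lemma one_le_deg {A : NFA' σ Q} {t : Q × σ × Q} (ht : t ∈ A.trans) :
    1 ≤ deg A t.1 t.2.1 := by
  refine Finset.card_pos.2 ⟨t, Finset.mem_filter.2 ⟨ht, ?_⟩⟩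
  exact ⟨rfl, rfl⟩

lemma deg_le_card (A : NFA' σ Q) (p : Q) (a : σ) : deg A p a ≤ A.trans.card :=
  Finset.card_filter_le _ _

lemma deg_eq_one {A : NFA' σ Q} {t : Q × σ × Q} (ht : t ∈ A.trans)
    (hnd : ¬ Nondet A t) : deg A t.1 t.2.1 = 1 := by
  have : A.trans.filter (fun u => u.1 = t.1 ∧ u.2.1 = t.2.1) = {t} := by
    apply Finset.eq_singleton_iff_unique_mem.2
    refine ⟨Finset.mem_filter.2 ⟨ht, ⟨rfl, rfl⟩⟩, fun u hu => ?_⟩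
    obtain ⟨hu1, hu2, hu3⟩ := Finset.mem_filter.1 hu
    by_contra hne
    refine hnd ⟨u.2.2, fun he => hne ?_, by rw [← hu2, ← hu3]; exact hu1⟩
    obtain ⟨u1, u2, u3⟩ := u; obtain ⟨t1, t2, t3⟩ := t
    simp_all
  rw [deg_def, this, Finset.card_singleton]

lemma runProb_ge_pow {A : NFA' σ Q} {f : Q × σ × Q → ℝ} {B : ℝ} (hB : 0 ≤ B)
    (hf1 : ∀ t ∈ A.trans, ¬ Nondet A t → f t = 1)
    (hf2 : ∀ t ∈ A.trans, B ≤ f t) :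
    ∀ {p : Q} {w : List σ} {ts : List (Q × σ × Q)} {r : Q},
      IsRun A.trans p w ts r →
      B ^ (ts.filter (fun t => decide (Nondet A t))).length ≤ runProb f ts := by
  intro p w ts r h
  induction h with
  | nil => simp [runProb_nil]
  | cons ht h ih =>
    rename_i p' a' q' r' w' ts'
    rw [List.filter_cons, runProb_cons]
    by_cases hnd : Nondet A (p', a', q')
    · rw [if_pos (by simpa using hnd), List.length_cons, pow_succ']
      have h0 : (0:ℝ) ≤ B ^ (ts'.filter (fun t => decide (Nondet A t))).length :=
        pow_nonneg hB _
      exact mul_le_mul (hf2 _ ht) ih h0 (hB.trans (hf2 _ ht))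
    · rw [if_neg (by simpa using hnd), hf1 _ ht hnd, one_mul]
      exact ih


lemma runProb_le_head {f : Q × σ × Q → ℝ} (h0 : ∀ t, 0 ≤ f t) (h1 : ∀ t, f t ≤ 1)
    {ts : List (Q × σ × Q)} {t0 : Q × σ × Q} (h : ts.head? = some t0) :
    runProb f ts ≤ f t0 := by
  cases ts with
  | nil => simp at h
  | cons t ts =>
    obtain rfl : t = t0 := by simpa using h
    rw [runProb_cons]
    exact mul_le_of_le_one_right (h0 t) (runProb_le_one h0 h1 ts)

end NFA'X
/-- A trim unambiguous NFA is not positively resolvable iff it has a witness word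
`xyz` where `y` loops on a state `q`, starts with a nondeterministic transition
`(q, a, q')`, and `z` continues from `q` with the alternative transition `(q, a, q'')`
to an accepting state. -/
theorem stmt9 {σ Q : Type} (A : NFA' σ Q)
    (hunamb : A.kAmbiguous 1)
    (htrim : ∀ q : Q, (∃ x, q ∈ A.reach A.init x) ∧ ∃ z, A.AccFrom q z) :
    ¬ A.PositivelyResolvable ↔
      ∃ (q q' q'' : Q) (a : σ) (x y z : List σ),
        q' ≠ q'' ∧ (q, a, q') ∈ A.trans ∧ (q, a, q'') ∈ A.trans ∧
        y ≠ [] ∧ y.head? = some a ∧ z.head? = some a ∧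
        q ∈ A.reach A.init x ∧
        (∃ ts, IsRun A.trans q y ts q ∧ ts.head? = some (q, a, q')) ∧
        (∃ ts r, IsRun A.trans q z ts r ∧ r ∈ A.accept ∧ ts.head? = some (q, a, q'')) := by
  classical
  open NFA'X in
  constructor
  · -- ¬ positively resolvable → witness, by contraposition
    intro hnpos
    by_contra hW
    apply hnpos
    have hW' : ¬ NFA'X.Witness A := hW
    set K := A.trans.card with hK
    have hK1 : (1:ℝ) ≤ (K : ℝ) + 1 := by
      have : (0:ℝ) ≤ (K : ℝ) := Nat.cast_nonneg K
      linarith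
    set B : ℝ := ((K : ℝ) + 1)⁻¹ with hBdef
    have hB0 : 0 < B := by positivity
    have hB1 : B ≤ 1 := inv_le_one_of_one_le₀ hK1
    set f : Q × σ × Q → ℝ :=
      fun t => if t ∈ A.trans then ((NFA'X.deg A t.1 t.2.1 : ℝ))⁻¹ else 0 with hfdef
    have hdegpos : ∀ t ∈ A.trans, (0:ℝ) < (NFA'X.deg A t.1 t.2.1 : ℝ) := by
      intro t ht
      exact_mod_cast Nat.lt_of_lt_of_le Nat.zero_lt_one (NFA'X.one_le_deg ht)
    have hf_nonneg : ∀ t, 0 ≤ f t := by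
      intro t; simp only [hfdef]
      by_cases h : t ∈ A.trans
      · rw [if_pos h]; exact (inv_nonneg).2 (hdegpos t h).le
      · rw [if_neg h]
    have hf_le_one : ∀ t, f t ≤ 1 := by
      intro t; simp only [hfdef]
      by_cases h : t ∈ A.trans
      · rw [if_pos h]; exact inv_le_one_of_one_le₀ (by exact_mod_cast NFA'X.one_le_deg h)
      · rw [if_neg h]; exact zero_le_one
    have hf_mem : ∀ t ∈ A.trans, f t = ((NFA'X.deg A t.1 t.2.1 : ℝ))⁻¹ := by
      intro t ht; simp only [hfdef]; exact if_pos ht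
    have hf1 : ∀ t ∈ A.trans, ¬ NFA'X.Nondet A t → f t = 1 := by
      intro t ht hnd
      rw [hf_mem t ht, NFA'X.deg_eq_one ht hnd, Nat.cast_one, inv_one]
    have hf2 : ∀ t ∈ A.trans, B ≤ f t := by
      intro t ht
      rw [hf_mem t ht, hBdef]
      refine inv_anti₀ (hdegpos t ht) ?_
      have h1 : ((NFA'X.deg A t.1 t.2.1 : ℕ) : ℝ) ≤ (K : ℝ) :=
        Nat.cast_le.2 (NFA'X.deg_le_card A t.1 t.2.1)
      linarith
    refine ⟨B ^ K, pow_pos hB0 K, ?_⟩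
    refine ⟨⟨f, hf_nonneg, hf_le_one, ?_, ?_⟩, ?_⟩
    · -- supp
      intro t h
      by_contra hc
      simp only [hfdef] at h
      exact h (if_neg hc)
    · -- sum_one
      intro p a ⟨q0, hq0⟩
      have hmem0 : (p, a, q0) ∈ A.trans.filter (fun t => t.1 = p ∧ t.2.1 = a) :=
        Finset.mem_filter.2 ⟨hq0, ⟨rfl, rfl⟩⟩
      have hdpos : 0 < NFA'X.deg A p a := Finset.card_pos.2 ⟨_, hmem0⟩
      have h1 : ∑ t ∈ A.trans, ({t : Q × σ × Q | t.1 = p ∧ t.2.1 = a}).indicator f t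
          = ∑ t ∈ A.trans.filter (fun t => t.1 = p ∧ t.2.1 = a), f t := by
        rw [Finset.sum_filter]
        refine Finset.sum_congr rfl fun t ht => ?_
        by_cases hc : t.1 = p ∧ t.2.1 = a
        · rw [Set.indicator_of_mem
            (show t ∈ {t : Q × σ × Q | t.1 = p ∧ t.2.1 = a} from hc) f, if_pos hc]
        · rw [Set.indicator_of_notMem
            (show t ∉ {t : Q × σ × Q | t.1 = p ∧ t.2.1 = a} from hc) f, if_neg hc]
      have h2 : ∀ t ∈ A.trans.filter (fun t => t.1 = p ∧ t.2.1 = a),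
          f t = ((NFA'X.deg A p a : ℝ))⁻¹ := by
        intro t ht
        obtain ⟨ht1, ht2, ht3⟩ := Finset.mem_filter.1 ht
        rw [hf_mem t ht1, ht2, ht3]
      rw [h1, Finset.sum_congr rfl h2, Finset.sum_const, nsmul_eq_mul,
        ← NFA'X.deg_def]
      exact mul_inv_cancel₀ (by exact_mod_cast hdpos.ne')
    · -- the language equality
      ext w
      simp only [Set.mem_setOf_eq]
      constructor
      · intro hle
        by_contra hw
        rw [NFA'X.accProb_eq_zero f hw] at hle
        have := pow_pos hB0 K
        linarith
      · intro hwl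
        obtain ⟨ts, hacc⟩ := hwl
        rw [NFA'X.accProb_eq_runProb hunamb f hacc]
        obtain ⟨rr, hrr, hrun⟩ := hacc
        have hnodup := NFA'X.nodup_nondet htrim hW' ts A.init w rr
          ⟨[], [], IsRun.nil _⟩ hrun
        have hcount := NFA'X.nondet_count_le (NFA'X.isRun_mem_trans hrun) hnodup
        calc B ^ K ≤ B ^ (ts.filter (fun t => decide (NFA'X.Nondet A t))).length :=
              pow_le_pow_of_le_one hB0.le hB1 hcount
          _ ≤ runProb f ts := NFA'X.runProb_ge_pow hB0.le hf1 hf2 hrun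
  · -- witness → ¬ positively resolvable
    rintro ⟨q, q', q'', a, x, y, z, hne, ht1, ht2, hy0, hya, hza,
      ⟨tsx, hx⟩, ⟨tsy, hty, hhy⟩, ⟨tsz, rz, htz, hrz, hhz⟩⟩
    rintro ⟨lam, hlam, R, hR⟩
    have hmem : ∀ w, w ∈ A.lang → lam ≤ A.accProb R.r w :=
      fun w hw => (Set.ext_iff.1 hR w).2 hw
    have hyle : runProb R.r tsy ≤ R.r (q, a, q') :=
      NFA'X.runProb_le_head R.nonneg R.le_one hhy
    have hzle : runProb R.r tsz ≤ R.r (q, a, q'') :=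
      NFA'X.runProb_le_head R.nonneg R.le_one hhz
    have loopn : ∀ n : ℕ, ∃ wn tsn, IsRun A.trans q wn tsn q ∧
        runProb R.r tsn ≤ (R.r (q, a, q')) ^ n := by
      intro n
      induction n with
      | zero => exact ⟨[], [], IsRun.nil q, by rw [NFA'X.runProb_nil, pow_zero]⟩
      | succ n ih =>
        obtain ⟨wn, tsn, h1, h2⟩ := ih
        refine ⟨y ++ wn, tsy ++ tsn, NFA'X.isRun_append hty h1, ?_⟩
        rw [NFA'X.runProb_append, pow_succ']
        exact mul_le_mul hyle h2 (NFA'X.runProb_nonneg R.nonneg tsn) (R.nonneg _)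
    have key : ∀ n : ℕ, lam ≤ (R.r (q, a, q')) ^ n * R.r (q, a, q'') := by
      intro n
      obtain ⟨wn, tsn, hn, hnle⟩ := loopn n
      have hacc : A.AccRun (x ++ (wn ++ z)) (tsx ++ (tsn ++ tsz)) :=
        ⟨rz, hrz, NFA'X.isRun_append hx (NFA'X.isRun_append hn htz)⟩
      have hl := hmem _ ⟨_, hacc⟩
      rw [NFA'X.accProb_eq_runProb hunamb R.r hacc, NFA'X.runProb_append,
        NFA'X.runProb_append] at hl
      refine hl.trans ?_
      have hpn : (0:ℝ) ≤ (R.r (q, a, q')) ^ n := pow_nonneg (R.nonneg _) n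
      calc runProb R.r tsx * (runProb R.r tsn * runProb R.r tsz)
          ≤ 1 * ((R.r (q, a, q')) ^ n * R.r (q, a, q'')) := by
            refine mul_le_mul (NFA'X.runProb_le_one R.nonneg R.le_one tsx)
              (mul_le_mul hnle hzle (NFA'X.runProb_nonneg R.nonneg tsz) hpn)
              (mul_nonneg (NFA'X.runProb_nonneg R.nonneg tsn)
                (NFA'X.runProb_nonneg R.nonneg tsz)) zero_le_one
        _ = (R.r (q, a, q')) ^ n * R.r (q, a, q'') := one_mul _
    have hp2pos : 0 < R.r (q, a, q'') := by
      rcases (R.nonneg (q, a, q'')).lt_or_eq with h | h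
      · exact h
      · exfalso
        have h0 := key 0
        rw [pow_zero, one_mul, ← h] at h0
        linarith
    have hsum := R.sum_one q a ⟨q', ht1⟩
    have htne : ((q, a, q') : Q × σ × Q) ≠ (q, a, q'') :=
      fun h => hne (congrArg (fun t => t.2.2) h)
    have hpair : R.r (q, a, q') + R.r (q, a, q'') ≤ 1 := by
      rw [← hsum]
      have hsubset : ({(q, a, q'), (q, a, q'')} : Finset (Q × σ × Q)) ⊆ A.trans := by
        intro t ht
        rcases Finset.mem_insert.1 ht with rfl | ht
        · exact ht1
        · rw [Finset.mem_singleton.1 ht]; exact ht2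
      calc R.r (q, a, q') + R.r (q, a, q'')
          = ∑ t ∈ ({(q, a, q'), (q, a, q'')} : Finset (Q × σ × Q)),
              ({t : Q × σ × Q | t.1 = q ∧ t.2.1 = a}).indicator R.r t := by
            rw [Finset.sum_pair htne,
              Set.indicator_of_mem
                (show ((q, a, q') : Q × σ × Q) ∈ {t : Q × σ × Q | t.1 = q ∧ t.2.1 = a}
                  from ⟨rfl, rfl⟩) R.r,
              Set.indicator_of_mem
                (show ((q, a, q'') : Q × σ × Q) ∈ {t : Q × σ × Q | t.1 = q ∧ t.2.1 = a}
                  from ⟨rfl, rfl⟩) R.r]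
        _ ≤ ∑ t ∈ A.trans, ({t : Q × σ × Q | t.1 = q ∧ t.2.1 = a}).indicator R.r t :=
            Finset.sum_le_sum_of_subset_of_nonneg hsubset
              (fun t _ _ => Set.indicator_nonneg (fun u _ => R.nonneg u) t)
    have hp1lt : R.r (q, a, q') < 1 := by linarith
    obtain ⟨n, hn⟩ := exists_pow_lt_of_lt_one hlam hp1lt
    have hkn := key n
    have hle2 : (R.r (q, a, q')) ^ n * R.r (q, a, q'') ≤ (R.r (q, a, q')) ^ n * 1 :=
      mul_le_mul_of_nonneg_left (R.le_one _) (pow_nonneg (R.nonneg _) n)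
    linarith
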